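/- Let k be an algebraically closed field, A a finite-dimensional k-algebra, and t a Calabi–Yau family of traces on the finitely generated projective right A-modules; for a finitely generated projective R and y ∈ End_A(R) let τ_R(y)_P := Σ_i g^i ∘ y ∘ g_i ∈ End_A(P), computed from any dual bases (g_i) of Hom_A(P,R) and (g^i) of Hom_A(R,P). Define ε : A → k by ε(a) := t_A(ℓ_a), where ℓ_a ∈ End_A(A) is the endomorphism of the right regular module given by left multiplication by a. Then ε is central (ε(ab) = ε(ba)) and nondegenerate (ε(ab) = 0 for all b implies a = 0), and for any pair of k-bases (u_l), (v_l) of A dual with respect to ε (i.e. ε(u_l v_m) = δ_{lm}) one has the equality of subsets of A: { τ_R(y)_A(1) : R a finitely generated projective right A-module, y ∈ End_A(R) } = { Σ_l u_l a v_l : a ∈ A }. (That is, evaluating the categorical Higman ideal at the regular module recovers the Higman ideal Hig(A) of the symmetric algebra (A, ε).) -/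

import Mathlib

universe u

/-- A bundled finitely generated projective right `A`-module (with compatible `k`-action). -/
structure FGProj (k A : Type u) [Field k] [Ring A] [Algebra k A] : Type (u + 1) where
  carrier : Type u
  [isAddCommGroup : AddCommGroup carrier]
  [isModuleK : Module k carrier]
  [isModuleA : Module Aᵐᵒᵖ carrier]
  [isTower : IsScalarTower k Aᵐᵒᵖ carrier]
  [isFinite : Module.Finite Aᵐᵒᵖ carrier]
  [isProjective : Module.Projective Aᵐᵒᵖ carrier]

attribute [instance] FGProj.isAddCommGroup FGProj.isModuleK FGProj.isModuleA
  FGProj.isTower FGProj.isFinite FGProj.isProjective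

instance (k A : Type u) [Field k] [Ring A] [Algebra k A] : CoeSort (FGProj k A) (Type u) :=
  ⟨FGProj.carrier⟩

/-- A Calabi–Yau family of traces on the finitely generated projective right `A`-modules. -/
structure CYTraces (k A : Type u) [Field k] [Ring A] [Algebra k A] : Type (u + 1) where
  t : ∀ P : FGProj k A, ((P : Type u) →ₗ[Aᵐᵒᵖ] P) →ₗ[k] k
  cyclic : ∀ (P Q : FGProj k A) (f : (P : Type u) →ₗ[Aᵐᵒᵖ] Q) (g : (Q : Type u) →ₗ[Aᵐᵒᵖ] P),
    t P (g ∘ₗ f) = t Q (f ∘ₗ g)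
  nondeg_left : ∀ (P Q : FGProj k A) (f : (P : Type u) →ₗ[Aᵐᵒᵖ] Q), f ≠ 0 →
    ∃ g : (Q : Type u) →ₗ[Aᵐᵒᵖ] P, t Q (f ∘ₗ g) ≠ 0
  nondeg_right : ∀ (P Q : FGProj k A) (g : (Q : Type u) →ₗ[Aᵐᵒᵖ] P), g ≠ 0 →
    ∃ f : (P : Type u) →ₗ[Aᵐᵒᵖ] Q, t Q (f ∘ₗ g) ≠ 0

section Regular

variable (k A : Type u) [Field k] [Ring A] [Algebra k A]

instance : Module.Finite Aᵐᵒᵖ A :=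
  Module.Finite.equiv (MulOpposite.opLinearEquiv Aᵐᵒᵖ : A ≃ₗ[Aᵐᵒᵖ] Aᵐᵒᵖ).symm

instance : Module.Projective Aᵐᵒᵖ A :=
  Module.Projective.of_equiv (MulOpposite.opLinearEquiv Aᵐᵒᵖ : A ≃ₗ[Aᵐᵒᵖ] Aᵐᵒᵖ).symm

/-- The right regular module `A_A`, as a bundled finitely generated projective right
`A`-module. -/
def regularFGProj : FGProj k A := ⟨A⟩

/-- Left multiplication by `a` as an endomorphism of the right regular module. -/
def lmulOp (a : A) : A →ₗ[Aᵐᵒᵖ] A where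
  toFun x := a * x
  map_add' := mul_add a
  map_smul' r x := by
    simp only [MulOpposite.smul_eq_mul_unop, RingHom.id_apply, mul_assoc]

end Regular

open scoped Classical

section AuxCY
variable {k A : Type u} [Field k] [Ring A] [Algebra k A]

lemma lmulOp_apply' (a x : A) : lmulOp A a x = a * x := rfl

lemma lmulOp_mul' (a b : A) : lmulOp A (a * b) = lmulOp A a ∘ₗ lmulOp A b := by
  refine LinearMap.ext fun x => ?_; simp [lmulOp_apply', mul_assoc]

lemma eq_lmulOp (f : A →ₗ[Aᵐᵒᵖ] A) : f = lmulOp A (f 1) := by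
  refine LinearMap.ext fun x => ?_
  calc f x = f ((MulOpposite.op x) • 1) := by
        rw [MulOpposite.smul_eq_mul_unop]; simp
    _ = (MulOpposite.op x) • f 1 := f.map_smul _ _
    _ = f 1 * x := rfl

noncomputable def lmulEquiv : A ≃ₗ[k] (A →ₗ[Aᵐᵒᵖ] A) where
  toFun a := lmulOp A a
  map_add' a b := by refine LinearMap.ext fun x => ?_; simp [lmulOp_apply', add_mul]
  map_smul' c a := by refine LinearMap.ext fun x => ?_; simp [lmulOp_apply', smul_mul_assoc]
  invFun f := f 1
  left_inv a := by simp [lmulOp_apply']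
  right_inv f := (eq_lmulOp f).symm

lemma map_kSmul {M N : Type u} [AddCommGroup M] [AddCommGroup N] [Module k M] [Module Aᵐᵒᵖ M]
    [IsScalarTower k Aᵐᵒᵖ M] [Module k N] [Module Aᵐᵒᵖ N] [IsScalarTower k Aᵐᵒᵖ N]
    (f : M →ₗ[Aᵐᵒᵖ] N) (c : k) (m : M) : f (c • m) = c • f m := by
  rw [show c • m = (c • (1:Aᵐᵒᵖ)) • m by rw [smul_assoc, one_smul],
     f.map_smul, smul_assoc, one_smul]

end AuxCY



/-- Let `t` be a Calabi–Yau family of traces on the f.g. projective right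
`A`-modules and define `ε : A → k` by `ε a = t_A (ℓ_a)`, using the right regular module.
Then `ε` is central and nondegenerate, and for any pair of dual bases `(uₗ), (vₗ)` of `A`
with respect to `ε`, the set of values `τ_R(y)_A(1)` (computed via dual bases with respect
to `t`) equals the Higman ideal `{Σ_l uₗ a vₗ : a ∈ A}`. -/
theorem higman_of_CY_traces_at_regular
    (k A : Type u) [Field k] [IsAlgClosed k] [Ring A] [Algebra k A] [FiniteDimensional k A]
    (t : CYTraces k A)
    (ε : A →ₗ[k] k) (hε : ∀ a : A, ε a = t.t (regularFGProj k A) (lmulOp A a)) :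
    (∀ a b : A, ε (a * b) = ε (b * a)) ∧
    (∀ a : A, (∀ b : A, ε (a * b) = 0) → a = 0) ∧
    (∀ (ι : Type u) [Fintype ι] (u v : Module.Basis ι k A),
      (∀ l m, ε (u l * v m) = if l = m then 1 else 0) →
      {x : A | ∃ (R : FGProj k A) (y : (R : Type u) →ₗ[Aᵐᵒᵖ] R) (n : ℕ)
          (g : Module.Basis (Fin n) k (A →ₗ[Aᵐᵒᵖ] R)) (g' : Module.Basis (Fin n) k ((R : Type u) →ₗ[Aᵐᵒᵖ] A)),
          (∀ i j, t.t R (g j ∘ₗ g' i) = if i = j then 1 else 0) ∧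
          x = (∑ i, g' i ∘ₗ y ∘ₗ g i) 1}
        = {x : A | ∃ a : A, x = ∑ l, u l * a * v l}) := by
  refine ⟨?_, ?_, ?_⟩
  · -- centrality
    intro a b
    rw [hε, hε, lmulOp_mul', lmulOp_mul']
    exact t.cyclic (regularFGProj k A) (regularFGProj k A) (lmulOp A b) (lmulOp A a)
  · -- nondegeneracy
    intro a ha
    by_contra h0
    have hf : (lmulOp A a : A →ₗ[Aᵐᵒᵖ] A) ≠ 0 := by
      intro hc
      exact h0 (by simpa [lmulOp_apply'] using DFunLike.congr_fun hc (1:A))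
    obtain ⟨g, hg⟩ := t.nondeg_left (regularFGProj k A) (regularFGProj k A) (lmulOp A a) hf
    apply hg
    let gA : A →ₗ[Aᵐᵒᵖ] A := g
    have h1 : lmulOp A a ∘ₗ gA = lmulOp A (a * gA (1:A)) := by
      rw [lmulOp_mul', ← eq_lmulOp]
    have h2 : t.t (regularFGProj k A) (lmulOp A (a * gA (1:A))) = 0 := by
      rw [← hε]; exact ha _
    exact (congrArg (fun F : A →ₗ[Aᵐᵒᵖ] A => t.t (regularFGProj k A) F) h1).trans h2
  · -- the set equality
    intro ι _ u v hduv
    have hcentral : ∀ a b : A, ε (a * b) = ε (b * a) := by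
      intro a b
      rw [hε, hε, lmulOp_mul', lmulOp_mul']
      exact t.cyclic (regularFGProj k A) (regularFGProj k A) (lmulOp A b) (lmulOp A a)
    have hcoef : ∀ (b : A) (l : ι), ε (u l * b) = v.repr b l := by
      intro b l
      conv_lhs => rw [← Module.Basis.sum_repr v b, Finset.mul_sum]
      rw [map_sum]
      rw [Finset.sum_congr rfl (fun m _ => by
        rw [mul_smul_comm, map_smul, hduv, smul_eq_mul] :
        ∀ m ∈ Finset.univ, ε (u l * (v.repr b m • v m))
          = v.repr b m * (if l = m then 1 else 0))]
      simp
    have hrepro : ∀ b : A, ∑ l, ε (u l * b) • v l = b := by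
      intro b
      conv_rhs => rw [← Module.Basis.sum_repr v b]
      exact Finset.sum_congr rfl (fun l _ => by rw [hcoef])
    ext x
    simp only [Set.mem_setOf_eq]
    constructor
    · rintro ⟨R, y, n, g, g', hdual, hx⟩
      -- duality of (g, g') expressed via ε
      have hεdual : ∀ i j, ε ((g' i) ((g j) (1:A))) = if i = j then 1 else 0 := by
        intro i j
        calc ε ((g' i) ((g j) (1:A)))
            = t.t (regularFGProj k A) (lmulOp A (((g' i ∘ₗ g j : A →ₗ[Aᵐᵒᵖ] A)) 1)) := hε _
          _ = t.t (regularFGProj k A) ((g' i ∘ₗ g j : A →ₗ[Aᵐᵒᵖ] A)) :=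
              congrArg (fun F : A →ₗ[Aᵐᵒᵖ] A => t.t (regularFGProj k A) F)
                (eq_lmulOp (g' i ∘ₗ g j)).symm
          _ = t.t R (g j ∘ₗ g' i) := t.cyclic (regularFGProj k A) R (g j) (g' i)
          _ = if i = j then 1 else 0 := hdual i j
      -- coefficients of an element of Hom(R, A) in the basis g'
      have hrep' : ∀ (h : (R : Type u) →ₗ[Aᵐᵒᵖ] A) (j : Fin n),
          ε (h ((g j) (1:A))) = g'.repr h j := by
        intro h j
        conv_lhs => rw [← Module.Basis.sum_repr g' h]
        rw [LinearMap.sum_apply, map_sum]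
        rw [Finset.sum_congr rfl (fun i _ => by
          rw [LinearMap.smul_apply, map_smul, smul_eq_mul, hεdual i j] :
          ∀ i ∈ Finset.univ, ε ((g'.repr h i • g' i) ((g j) (1:A)))
            = g'.repr h i * (if i = j then 1 else 0))]
        simp
      -- a finite projective splitting of R
      obtain ⟨N, π, hπ⟩ := Module.Finite.exists_fin' Aᵐᵒᵖ (R : Type u)
      obtain ⟨q, hq⟩ := Module.projective_lifting_property π LinearMap.id hπ
      set X : Fin N → (R : Type u) := fun m => π (fun j => if m = j then 1 else 0) with hXdef
      set F : Fin N → ((R : Type u) →ₗ[Aᵐᵒᵖ] A) := fun m =>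
        ((MulOpposite.opLinearEquiv Aᵐᵒᵖ : A ≃ₗ[Aᵐᵒᵖ] Aᵐᵒᵖ).symm.toLinearMap) ∘ₗ
          (LinearMap.proj m) ∘ₗ q with hFdef
      have hFX : ∀ w : (R : Type u), ∑ m, MulOpposite.op (F m w) • X m = w := by
        intro w
        have h1 : π (q w) = w := by
          have := LinearMap.congr_fun hq w
          simpa using this
        calc ∑ m, MulOpposite.op (F m w) • X m
            = ∑ m, (q w) m • π (fun j => if m = j then 1 else 0) := by
              refine Finset.sum_congr rfl fun m _ => rfl
          _ = π (q w) := (LinearMap.pi_apply_eq_sum_univ π (q w)).symm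
          _ = w := h1
      -- the combined reproducing family
      have hrepro2 : ∀ w : (R : Type u),
          ∑ m, ∑ l, ε (u l * F m w) • (MulOpposite.op (v l) • X m) = w := by
        intro w
        have hinner : ∀ m : Fin N, ∑ l, ε (u l * F m w) • (MulOpposite.op (v l) • X m)
            = MulOpposite.op (F m w) • X m := by
          intro m
          calc ∑ l, ε (u l * F m w) • (MulOpposite.op (v l) • X m)
              = ∑ l, MulOpposite.op (ε (u l * F m w) • v l) • X m := by
                refine Finset.sum_congr rfl fun l _ => ?_
                rw [MulOpposite.op_smul, smul_assoc]
            _ = MulOpposite.op (∑ l, ε (u l * F m w) • v l) • X m := by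
                rw [show MulOpposite.op (∑ l, ε (u l * F m w) • v l)
                    = ∑ l, MulOpposite.op (ε (u l * F m w) • v l) from
                  map_sum (MulOpposite.opAddEquiv (α := A)) _ _, Finset.sum_smul]
            _ = MulOpposite.op (F m w) • X m := by rw [hrepro (F m w)]
        rw [Finset.sum_congr rfl (fun m _ => hinner m)]
        exact hFX w
      -- the main computation
      refine ⟨∑ m, F m (y (X m)), ?_⟩
      have hx1 : x = ∑ i, (g' i) (y ((g i) (1:A))) := by
        rw [hx, LinearMap.sum_apply]
        exact Finset.sum_congr rfl fun i _ => rfl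
      calc x = ∑ i, (g' i) (y ((g i) (1:A))) := hx1
        _ = ∑ i, ∑ m, ∑ l, ε (u l * F m ((g i) (1:A))) •
              (g' i) (y (MulOpposite.op (v l) • X m)) := by
            refine Finset.sum_congr rfl fun i _ => ?_
            conv_lhs => rw [← hrepro2 ((g i) (1:A))]
            rw [map_sum, map_sum]
            refine Finset.sum_congr rfl fun m _ => ?_
            rw [map_sum, map_sum]
            refine Finset.sum_congr rfl fun l _ => ?_
            rw [map_kSmul y, map_kSmul (g' i)]
        _ = ∑ m, ∑ l, ∑ i, ε (u l * F m ((g i) (1:A))) •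
              (g' i) (y (MulOpposite.op (v l) • X m)) := by
            rw [Finset.sum_comm]
            refine Finset.sum_congr rfl fun m _ => Finset.sum_comm
        _ = ∑ m, ∑ l, u l * (F m (y (X m)) * v l) := by
            refine Finset.sum_congr rfl fun m _ => Finset.sum_congr rfl fun l _ => ?_
            have hc : ∀ i, ε (u l * F m ((g i) (1:A)))
                = g'.repr (lmulOp A (u l) ∘ₗ F m) i := fun i => hrep' (lmulOp A (u l) ∘ₗ F m) i
            calc ∑ i, ε (u l * F m ((g i) (1:A))) • (g' i) (y (MulOpposite.op (v l) • X m))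
                = ∑ i, (g'.repr (lmulOp A (u l) ∘ₗ F m) i • g' i)
                    (y (MulOpposite.op (v l) • X m)) := by
                  refine Finset.sum_congr rfl fun i _ => ?_
                  rw [hc i, LinearMap.smul_apply]
              _ = (∑ i, g'.repr (lmulOp A (u l) ∘ₗ F m) i • g' i)
                    (y (MulOpposite.op (v l) • X m)) := by
                  rw [LinearMap.sum_apply]
              _ = (lmulOp A (u l) ∘ₗ F m) (y (MulOpposite.op (v l) • X m)) := by
                  rw [Module.Basis.sum_repr g' (lmulOp A (u l) ∘ₗ F m)]
              _ = u l * (F m (y (X m)) * v l) := by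
                  rw [LinearMap.comp_apply, lmulOp_apply', y.map_smul, (F m).map_smul,
                    MulOpposite.smul_eq_mul_unop, MulOpposite.unop_op]
        _ = ∑ l, u l * (∑ m, F m (y (X m))) * v l := by
            rw [Finset.sum_comm]
            refine Finset.sum_congr rfl fun l _ => ?_
            rw [Finset.mul_sum, Finset.sum_mul]
            exact Finset.sum_congr rfl fun m _ => (mul_assoc _ _ _).symm
    · rintro ⟨a, rfl⟩
      have e : ι ≃ Fin (Fintype.card ι) := Fintype.equivFin ι
      refine ⟨regularFGProj k A, lmulOp A a, Fintype.card ι,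
        (v.map lmulEquiv).reindex e, (u.map lmulEquiv).reindex e, ?_, ?_⟩
      · intro i j
        have hG : ((v.map lmulEquiv).reindex e) j = lmulOp A (v (e.symm j)) := by
          rw [Module.Basis.reindex_apply, Module.Basis.map_apply]; rfl
        have hG' : ((u.map lmulEquiv).reindex e) i = lmulOp A (u (e.symm i)) := by
          rw [Module.Basis.reindex_apply, Module.Basis.map_apply]; rfl
        have main : t.t (regularFGProj k A)
            ((((v.map lmulEquiv).reindex e) j ∘ₗ ((u.map lmulEquiv).reindex e) i :
              A →ₗ[Aᵐᵒᵖ] A)) = if i = j then 1 else 0 := by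
          rw [hG, hG']
          have h2 : (lmulOp A (v (e.symm j)) ∘ₗ lmulOp A (u (e.symm i)) : A →ₗ[Aᵐᵒᵖ] A)
              = lmulOp A (v (e.symm j) * u (e.symm i)) := (lmulOp_mul' _ _).symm
          calc t.t (regularFGProj k A) (lmulOp A (v (e.symm j)) ∘ₗ lmulOp A (u (e.symm i)))
              = t.t (regularFGProj k A) (lmulOp A (v (e.symm j) * u (e.symm i))) :=
                congrArg (fun F : A →ₗ[Aᵐᵒᵖ] A => t.t (regularFGProj k A) F) h2
            _ = ε (v (e.symm j) * u (e.symm i)) := (hε _).symm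
            _ = ε (u (e.symm i) * v (e.symm j)) := hcentral _ _
            _ = if i = j then 1 else 0 := by
                rw [hduv]
                by_cases h : i = j <;> simp [h]
        exact main
      · have hval : ∀ i, ((((u.map lmulEquiv).reindex e) i) ∘ₗ (lmulOp A a) ∘ₗ
            (((v.map lmulEquiv).reindex e) i) : A →ₗ[Aᵐᵒᵖ] A) (1:A)
            = u (e.symm i) * a * v (e.symm i) := by
          intro i
          have hG : ((v.map lmulEquiv).reindex e) i = lmulOp A (v (e.symm i)) := by
            rw [Module.Basis.reindex_apply, Module.Basis.map_apply]; rfl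
          have hG' : ((u.map lmulEquiv).reindex e) i = lmulOp A (u (e.symm i)) := by
            rw [Module.Basis.reindex_apply, Module.Basis.map_apply]; rfl
          rw [hG, hG']
          simp [lmulOp_apply', mul_assoc]
        have main : (∑ l, u l * a * v l)
            = (∑ i, (((u.map lmulEquiv).reindex e) i ∘ₗ (lmulOp A a) ∘ₗ
                ((v.map lmulEquiv).reindex e) i : A →ₗ[Aᵐᵒᵖ] A)) (1:A) := by
          rw [LinearMap.sum_apply, Finset.sum_congr rfl (fun i _ => hval i)]
          exact (Equiv.sum_comp e.symm (fun l => u l * a * v l)).symm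
        exact main
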